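/- For parameters τ₁ ≥ 0 and τ₂ ≤ τ₁, and H positive semi-definite, the map Σ(C) = τ₁ Tr(H C) H − τ₂ H C H sends positive semi-definite matrices to positive semi-definite matrices, and is monotone: C ≥ C' implies Σ(C) ≥ Σ(C'). -/

import Mathlib

open Matrix
open scoped MatrixOrder

section aux

variable {n : Type*} [Fintype n] [DecidableEq n]

lemma aux_smul {c : ℝ} (hc : 0 ≤ c) {M : Matrix n n ℝ} (hM : M.PosSemidef) :
    (c • M).PosSemidef := by
  have herm : (c • M).IsHermitian := by
    show (c • M)ᴴ = c • M
    rw [Matrix.conjTranspose_smul, hM.1.eq, star_trivial]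
  refine .of_dotProduct_mulVec_nonneg herm fun x => ?_
  have := hM.dotProduct_mulVec_nonneg x
  simp only [smul_mulVec, dotProduct_smul, smul_eq_mul]
  positivity

lemma aux_trace_nonneg {M : Matrix n n ℝ} (hM : M.PosSemidef) : 0 ≤ M.trace := by
  rw [Matrix.trace]
  refine Finset.sum_nonneg fun i _ => ?_
  have := hM.dotProduct_mulVec_nonneg (Pi.single i 1)
  simpa [dotProduct, mulVec, Pi.single_apply, Matrix.diag] using this

lemma aux_key {M : Matrix n n ℝ} (hM : M.PosSemidef) :
    (M.trace • (1 : Matrix n n ℝ) - M).PosSemidef := by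
  obtain ⟨B, rfl⟩ : ∃ B : Matrix n n ℝ, M = Bᴴ * B := ⟨CFC.sqrt M, by
    rw [(CFC.sqrt_nonneg M).posSemidef.isHermitian.eq, CFC.sqrt_mul_sqrt_self M hM.nonneg]⟩
  have herm : ((Bᴴ * B).trace • (1 : Matrix n n ℝ) - Bᴴ * B).IsHermitian := by
    show _ᴴ = _
    rw [Matrix.conjTranspose_sub, Matrix.conjTranspose_smul, Matrix.conjTranspose_one,
      (Matrix.isHermitian_conjTranspose_mul_self B).eq, star_trivial]
  refine .of_dotProduct_mulVec_nonneg herm fun x => ?_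
  have hsx : star x = x := by simp
  rw [Matrix.sub_mulVec, dotProduct_sub, hsx, Matrix.smul_mulVec,
    dotProduct_smul, Matrix.one_mulVec]
  rw [sub_nonneg]
  have h1 : dotProduct x ((Bᴴ * B) *ᵥ x) = ∑ j, (∑ i, B j i * x i) ^ 2 := by
    rw [← Matrix.mulVec_mulVec, Matrix.dotProduct_mulVec x,
      show Bᴴ = Bᵀ from by ext i j; simp [Matrix.conjTranspose_apply]]
    rw [← Matrix.mulVec_transpose, Matrix.transpose_transpose]
    simp [dotProduct, Matrix.mulVec, sq]
  have h2 : (Bᴴ * B).trace = ∑ i, ∑ j, (B j i) ^ 2 := by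
    simp [Matrix.trace, Matrix.diag, Matrix.mul_apply, Matrix.conjTranspose_apply, sq]
  rw [h1, h2, smul_eq_mul]
  have key : ∀ j, (∑ i, B j i * x i) ^ 2 ≤ (∑ i, (B j i) ^ 2) * ∑ i, (x i) ^ 2 :=
    fun j => Finset.sum_mul_sq_le_sq_mul_sq _ _ _
  calc ∑ j, (∑ i, B j i * x i) ^ 2
      ≤ ∑ j, (∑ i, (B j i) ^ 2) * ∑ i, (x i) ^ 2 :=
        Finset.sum_le_sum fun j _ => key j
    _ = (∑ i, ∑ j, (B j i) ^ 2) * dotProduct x x := by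
        rw [← Finset.sum_mul, Finset.sum_comm]
        simp [dotProduct, sq]

lemma aux_main {H : Matrix n n ℝ} (hH : H.PosSemidef) {τ₁ τ₂ : ℝ} (h1 : 0 ≤ τ₁)
    (h2 : τ₂ ≤ τ₁) {C : Matrix n n ℝ} (hC : C.PosSemidef) :
    (τ₁ • (H * C).trace • H - τ₂ • (H * C * H)).PosSemidef := by
  set S := CFC.sqrt H with hSdef
  have hS : S * S = H := CFC.sqrt_mul_sqrt_self H hH.nonneg
  have hSH : Sᴴ = S := (CFC.sqrt_nonneg H).posSemidef.isHermitian.eq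
  have hM : (S * C * S).PosSemidef := by
    have := hC.conjTranspose_mul_mul_same S
    rwa [hSH] at this
  have htr : (H * C).trace = (S * C * S).trace := by
    rw [← hS, mul_assoc, Matrix.trace_mul_comm, mul_assoc]
  have hHCH : H * C * H = S * (S * C * S) * S := by
    rw [← hS]; simp only [mul_assoc]
  have htrnn : 0 ≤ (H * C).trace := htr ▸ aux_trace_nonneg hM
  rcases le_or_gt τ₂ 0 with hτ2 | hτ2
  · have : τ₁ • (H * C).trace • H - τ₂ • (H * C * H)
        = τ₁ • (H * C).trace • H + (-τ₂) • (H * C * H) := by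
      rw [neg_smul, sub_eq_add_neg]
    rw [this]
    have hX : (H * C * H).PosSemidef := by
      have h3 := hM.conjTranspose_mul_mul_same S
      rw [hSH, ← hHCH] at h3
      exact h3
    exact (aux_smul h1 (aux_smul htrnn hH)).add (aux_smul (by linarith) hX)
  · have decomp : τ₁ • (H * C).trace • H - τ₂ • (H * C * H)
        = (τ₁ - τ₂) • ((H * C).trace • H) + τ₂ • ((H * C).trace • H - H * C * H) := by
      rw [sub_smul, smul_sub]; abel
    rw [decomp]
    have hmid : ((H * C).trace • H - H * C * H).PosSemidef := by
      have hconj := (aux_key hM).conjTranspose_mul_mul_same S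
      rw [hSH] at hconj
      have heq : S * ((S * C * S).trace • (1 : Matrix n n ℝ) - S * C * S) * S
          = (H * C).trace • H - H * C * H := by
        rw [htr, hHCH, Matrix.mul_sub, Matrix.sub_mul, Matrix.mul_smul, Matrix.smul_mul,
          Matrix.mul_one, hS]
      rwa [heq] at hconj
    exact (aux_smul (by linarith) (aux_smul htrnn hH)).add (aux_smul hτ2.le hmid)

end aux

/-- For `τ₁ ≥ 0`, `τ₂ ≤ τ₁`, `H` PSD, the map `Σ(C) = τ₁ Tr(HC) H − τ₂ H C H`
sends PSD matrices to PSD matrices and is monotone in the Loewner order. -/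
theorem stmt_2 {n : Type*} [Fintype n] [DecidableEq n]
    (H : Matrix n n ℝ) (hH : H.PosSemidef) (τ₁ τ₂ : ℝ) (h1 : 0 ≤ τ₁) (h2 : τ₂ ≤ τ₁) :
    (∀ C : Matrix n n ℝ, C.PosSemidef →
      (τ₁ • (H * C).trace • H - τ₂ • (H * C * H)).PosSemidef) ∧
    (∀ C C' : Matrix n n ℝ, (C - C').PosSemidef →
      ((τ₁ • (H * C).trace • H - τ₂ • (H * C * H))
        - (τ₁ • (H * C').trace • H - τ₂ • (H * C' * H))).PosSemidef) := by
  refine ⟨fun C hC => aux_main hH h1 h2 hC, fun C C' hCC' => ?_⟩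
  have := aux_main hH h1 h2 hCC'
  have heq : τ₁ • (H * (C - C')).trace • H - τ₂ • (H * (C - C') * H)
      = (τ₁ • (H * C).trace • H - τ₂ • (H * C * H))
        - (τ₁ • (H * C').trace • H - τ₂ • (H * C' * H)) := by
    simp only [Matrix.mul_sub, Matrix.sub_mul, Matrix.trace_sub, sub_smul, smul_sub]
    abel
  rwa [heq] at this
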